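/- Let β ∈ [1/2, log₂(3/2)], let C_β = 2·√(2^{β+1} − 2), and define B(t) = C_β · t(1 − t). Then for all real numbers x, y with 0 ≤ x ≤ y ≤ 1 and x ≥ y − B(y), one has ((y − x)^{1/β} + B(y)^{1/β})^β + B(x) ≥ 2·B((x + y)/2). -/
import Mathlib

open Real

lemma concave_step {q u : ℝ} (hq0 : 0 ≤ q) (hq1 : q ≤ 1) (hu0 : 0 ≤ u) (hu1 : u ≤ 1) :
    1 + ((2:ℝ) ^ q - 1) * u ≤ (1 + u) ^ q := by
  have h := (Real.concaveOn_rpow hq0 hq1).2 (Set.mem_Ici.2 (zero_le_one (α := ℝ)))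
    (Set.mem_Ici.2 (by norm_num : (0:ℝ) ≤ 2))
    (show (0:ℝ) ≤ 1 - u by linarith) hu0 (by ring : (1 - u) + u = 1)
  simp only [smul_eq_mul, Real.one_rpow] at h
  have h2 : (1 - u) * 1 + u * 2 = 1 + u := by ring
  rw [h2] at h
  nlinarith [h]

lemma key_ineq {β C b d : ℝ} (hβ0 : (0:ℝ) < β) (hβ2 : β ≤ 1) (hβhalf : 1/2 ≤ β)
    (hC : 0 ≤ C) (hCb : C * b / 2 ≤ (2:ℝ) ^ β - 1) (hd0 : 0 ≤ d) (hdb : d ≤ b) :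
    b + C / 2 * d ^ 2 ≤ (d ^ (1/β) + b ^ (1/β)) ^ β := by
  have hβne : β ≠ 0 := hβ0.ne'
  have h1β : (1:ℝ)/β ≠ 0 := one_div_ne_zero hβne
  have hb0 : 0 ≤ b := hd0.trans hdb
  rcases eq_or_lt_of_le hb0 with hb | hb
  · have hd : d = 0 := le_antisymm (hdb.trans hb.symm.le) hd0
    rw [← hb, hd]
    simp only [one_div, Real.zero_rpow (inv_ne_zero hβne), add_zero,
      Real.zero_rpow hβne]
    norm_num
  set t := d / b with ht
  have ht0 : 0 ≤ t := by positivity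
  have ht1 : t ≤ 1 := (div_le_one hb).2 hdb
  have hdt : d = t * b := (div_mul_cancel₀ d hb.ne').symm
  have hrw : (d ^ (1/β) + b ^ (1/β)) ^ β = (t ^ (1/β) + 1) ^ β * b := by
    rw [hdt, Real.mul_rpow ht0 hb0]
    have h3 : t ^ (1/β) * b ^ (1/β) + b ^ (1/β) = (t ^ (1/β) + 1) * b ^ (1/β) := by ring
    rw [h3, Real.mul_rpow (by positivity) (by positivity), ← Real.rpow_mul hb0,
      one_div, inv_mul_cancel₀ hβne, Real.rpow_one]
  rw [hrw]
  have hstep1 : t ^ (2:ℝ) ≤ t ^ (1/β) := by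
    rcases eq_or_lt_of_le ht0 with h0 | h0
    · rw [← h0, Real.zero_rpow h1β, Real.zero_rpow (by norm_num : (2:ℝ) ≠ 0)]
    · exact Real.rpow_le_rpow_of_exponent_ge h0 ht1 (by rw [div_le_iff₀ hβ0]; linarith)
  have ht2 : (0:ℝ) ≤ t ^ (2:ℝ) := Real.rpow_nonneg ht0 2
  have ht2' : t ^ (2:ℝ) ≤ 1 := Real.rpow_le_one ht0 ht1 (by norm_num)
  have hstep2 : 1 + ((2:ℝ) ^ β - 1) * t ^ (2:ℝ) ≤ (1 + t ^ (2:ℝ)) ^ β :=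
    concave_step hβ0.le hβ2 ht2 ht2'
  have hmono : (1 + t ^ (2:ℝ)) ^ β ≤ (t ^ (1/β) + 1) ^ β := by
    rw [add_comm]
    exact Real.rpow_le_rpow (by positivity) (by linarith) hβ0.le
  have hchain : 1 + ((2:ℝ) ^ β - 1) * t ^ (2:ℝ) ≤ (t ^ (1/β) + 1) ^ β :=
    hstep2.trans hmono
  have htsq : t ^ (2:ℝ) = t ^ 2 := by
    rw [show ((2:ℝ)) = ((2:ℕ):ℝ) by norm_num, Real.rpow_natCast]
  rw [htsq] at hchain
  have hfin : b + C / 2 * d ^ 2 ≤ (1 + ((2:ℝ) ^ β - 1) * t ^ 2) * b := by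
    have hd2 : d ^ 2 = t ^ 2 * b ^ 2 := by rw [hdt]; ring
    rw [hd2]
    have h1 : C * b / 2 * (t ^ 2 * b) ≤ ((2:ℝ) ^ β - 1) * (t ^ 2 * b) :=
      mul_le_mul_of_nonneg_right hCb (by positivity)
    nlinarith [h1]
  calc b + C / 2 * d ^ 2 ≤ (1 + ((2:ℝ) ^ β - 1) * t ^ 2) * b := hfin
    _ ≤ (t ^ (1/β) + 1) ^ β * b := mul_le_mul_of_nonneg_right hchain hb0

/-- The quadratic polynomial `B(t) = C_β t(1−t)` with `C_β = 2√(2^{β+1} − 2)`. -/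
noncomputable def Bquad (β t : ℝ) : ℝ := 2 * Real.sqrt ((2 : ℝ) ^ (β + 1) - 2) * (t * (1 - t))

/-- for `β ∈ [1/2, log₂(3/2)]`, `0 ≤ x ≤ y ≤ 1` with `x ≥ y − B(y)`,
`((y−x)^{1/β} + B(y)^{1/β})^β + B(x) ≥ 2 B((x+y)/2)`. -/
theorem two_point_quad_power (β : ℝ) (hβ : β ∈ Set.Icc (1 / 2 : ℝ) (Real.logb 2 (3 / 2)))
    (x y : ℝ) (hx0 : 0 ≤ x) (hxy : x ≤ y) (hy1 : y ≤ 1) (hx : y - Bquad β y ≤ x) :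
    ((y - x) ^ (1 / β) + (Bquad β y) ^ (1 / β)) ^ β + Bquad β x ≥
      2 * Bquad β ((x + y) / 2) := by
  obtain ⟨hβl, hβr⟩ := hβ
  have hβ0 : (0:ℝ) < β := by linarith
  -- 2 ^ β ≤ 3/2
  have h2β : (2:ℝ) ^ β ≤ 3 / 2 := by
    calc (2:ℝ) ^ β ≤ (2:ℝ) ^ Real.logb 2 (3/2) :=
          Real.rpow_le_rpow_of_exponent_le (by norm_num) hβr
      _ = 3 / 2 := Real.rpow_logb (by norm_num) (by norm_num) (by norm_num)
  have hβ1 : β ≤ 1 := by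
    have := (Real.rpow_le_rpow_left_iff (by norm_num : (1:ℝ) < 2)).1
      (show (2:ℝ) ^ β ≤ (2:ℝ) ^ (1:ℝ) by rw [Real.rpow_one]; linarith)
    exact this
  set s : ℝ := (2:ℝ) ^ (β + 1) - 2 with hs
  have hsval : s = 2 * (2:ℝ) ^ β - 2 := by
    rw [hs, Real.rpow_add (by norm_num), Real.rpow_one]; ring
  have hs0 : 0 ≤ s := by
    rw [hsval]
    have : (2:ℝ) ^ (0:ℝ) ≤ (2:ℝ) ^ β :=
      Real.rpow_le_rpow_of_exponent_le (by norm_num) (by linarith)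
    rw [Real.rpow_zero] at this; linarith
  set C : ℝ := 2 * Real.sqrt s with hC
  have hC0 : 0 ≤ C := by positivity
  have hCsq : C ^ 2 = 4 * s := by
    rw [hC, mul_pow, Real.sq_sqrt hs0]; ring
  have hkeyC : C ^ 2 / 8 = (2:ℝ) ^ β - 1 := by rw [hCsq, hsval]; ring
  have hBy : Bquad β y = C * (y * (1 - y)) := rfl
  have hBy0 : 0 ≤ Bquad β y := by
    rw [hBy]; apply mul_nonneg hC0; nlinarith [hx0.trans hxy]
  have hByle : Bquad β y ≤ C / 4 := by
    rw [hBy]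
    nlinarith [mul_le_mul_of_nonneg_left (show y * (1 - y) ≤ 1/4 by nlinarith [sq_nonneg (y - 1/2)]) hC0]
  have hCb : C * Bquad β y / 2 ≤ (2:ℝ) ^ β - 1 := by
    rw [← hkeyC]
    nlinarith [mul_le_mul_of_nonneg_left hByle hC0]
  have hd0 : 0 ≤ y - x := by linarith
  have hdb : y - x ≤ Bquad β y := by linarith
  have hkey := key_ineq hβ0 hβ1 hβl hC0 hCb hd0 hdb
  have hid : 2 * Bquad β ((x + y) / 2) =
      Bquad β x + Bquad β y + C / 2 * (y - x) ^ 2 := by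
    simp only [Bquad, ← hs, ← hC]; ring
  rw [ge_iff_le, hid]
  linarith [hkey]
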